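/- Let A be a 3×3 integer matrix with det A = 1 or det A = −1, and assume A is hyperbolic, i.e. no complex root of its characteristic polynomial has absolute value 1. Then the characteristic polynomial of A, regarded as a polynomial with rational coefficients, is irreducible over ℚ; consequently its three complex roots are pairwise distinct, i.e. every eigenvalue of A has algebraic multiplicity one. -/

import Mathlib

open Polynomial

private lemma no_int_root (A : Matrix (Fin 3) (Fin 3) ℤ) (hdet : A.det = 1 ∨ A.det = -1)
    (hhyp : ∀ z : ℂ, (A.charpoly.map (Int.castRingHom ℂ)).IsRoot z → ‖z‖ ≠ 1)
    (n : ℤ) : A.charpoly.eval n ≠ 0 := by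
  intro h0
  -- n divides the constant coefficient, which is ±1
  have hdvd : n ∣ A.charpoly.eval 0 := by
    have := Polynomial.sub_dvd_eval_sub n 0 A.charpoly
    simpa [h0] using this
  have hc0 : A.charpoly.eval 0 = - A.det := by
    have := Matrix.det_eq_sign_charpoly_coeff A
    simp only [Fintype.card_fin] at this
    rw [Polynomial.coeff_zero_eq_eval_zero] at this
    rw [this]; ring
  have hunit : IsUnit n := by
    rcases hdet with h | h <;> rw [hc0, h] at hdvd <;>
      [exact isUnit_of_dvd_unit hdvd (by simp); exact isUnit_of_dvd_unit hdvd (by simp)]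
  -- so n = ±1, giving a complex root of absolute value 1
  have habs : ‖(n : ℂ)‖ = 1 := by
    rcases Int.isUnit_iff.mp hunit with rfl | rfl <;> simp
  refine hhyp (n : ℂ) ?_ habs
  show Polynomial.eval _ _ = 0
  rw [Polynomial.eval_intCast_map]
  simp [h0]

/-- Let `A` be a `3×3` integer matrix with `det A = ±1`, and assume
`A` is hyperbolic: no complex root of its characteristic polynomial has absolute
value `1`. Then the characteristic polynomial of `A`, regarded over `ℚ`, is
irreducible; consequently its three complex roots are pairwise distinct, i.e. every
eigenvalue of `A` has algebraic multiplicity one. -/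
theorem stmt11 (A : Matrix (Fin 3) (Fin 3) ℤ) (hdet : A.det = 1 ∨ A.det = -1)
    (hhyp : ∀ z : ℂ, (A.charpoly.map (Int.castRingHom ℂ)).IsRoot z → ‖z‖ ≠ 1) :
    Irreducible (A.charpoly.map (Int.castRingHom ℚ)) ∧
      Multiset.card (A.charpoly.map (Int.castRingHom ℂ)).roots = 3 ∧
      (A.charpoly.map (Int.castRingHom ℂ)).roots.Nodup := by
  have hmon : A.charpoly.Monic := A.charpoly_monic
  have hdeg : A.charpoly.natDegree = 3 := by
    simp
  set q : Polynomial ℚ := A.charpoly.map (Int.castRingHom ℚ) with hq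
  have hqmon : q.Monic := hmon.map _
  have hqdeg : q.natDegree = 3 := by
    rw [hq, Polynomial.natDegree_map_eq_of_injective (Int.cast_injective), hdeg]
  -- no rational root
  have hnoroot : ∀ x : ℚ, ¬ q.IsRoot x := by
    intro x hx
    have hint : IsIntegral ℤ x := by
      refine ⟨A.charpoly, hmon, ?_⟩
      rwa [Polynomial.eval₂_eq_eval_map]
    obtain ⟨n, rfl⟩ := IsIntegrallyClosed.isIntegral_iff.mp hint
    have : A.charpoly.eval n = 0 := by
      have key := Polynomial.eval_intCast_map (Int.castRingHom ℚ) A.charpoly n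
      simp only [Int.cast_id] at key
      have h2 : (Int.castRingHom ℚ) (A.charpoly.eval n) = 0 := by
        rw [← key]; exact hx
      rw [eq_intCast] at h2
      exact_mod_cast h2
    exact no_int_root A hdet hhyp n this
  have hirr : Irreducible q := by
    rw [Polynomial.irreducible_iff_roots_eq_zero_of_degree_le_three (by omega) (by omega)]
    rw [Multiset.eq_zero_iff_forall_notMem]
    intro x hx
    exact hnoroot x ((Polynomial.mem_roots hqmon.ne_zero).mp hx)
  -- the map to ℂ factors through ℚ
  have hfac : A.charpoly.map (Int.castRingHom ℂ) = q.map (algebraMap ℚ ℂ) := by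
    rw [hq, Polynomial.map_map,
      RingHom.ext_int ((algebraMap ℚ ℂ).comp (Int.castRingHom ℚ)) (Int.castRingHom ℂ)]
  refine ⟨hirr, ?_, ?_⟩
  · have hsplits : (A.charpoly.map (Int.castRingHom ℂ)).Splits :=
      IsAlgClosed.splits _
    have := (Polynomial.splits_iff_card_roots).mp hsplits
    rw [this, Polynomial.natDegree_map_eq_of_injective (Int.cast_injective), hdeg]
  · have hsep : q.Separable := hirr.separable
    have : (q.map (algebraMap ℚ ℂ)).Separable := hsep.map
    rw [hfac]
    exact Polynomial.nodup_roots this
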